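/- Assume the greedy-injection conjecture (for all X ∈ P^m and odd k, the iterated map Ψ_{(e,(0,ke))}∘⋯∘Ψ_{(e,(0,0))}(X,X) = (X_1,X_2) satisfies X_1 ⊆ X_2). Then for every e-regular partition λ and every k ≥ 0, the iterated crystal isomorphisms satisfy ψ_{(2e,(0,(2k+1)e))}∘⋯∘ψ_{(2e,(0,3e))}∘ψ_{(2e,(0,e))}(λ,λ) = ψ_{(e,(0,(2k+1)e))}∘⋯∘ψ_{(e,(0,e))}∘ψ_{(e,(0,0))}(λ,λ); in particular the stabilized isomorphisms agree: ψ̃_{(2e,(0,e))}(λ,λ) = ψ̃_{(e,(0,0))}(λ,λ). -/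

import Mathlib

structure YPartition where
  parts : ℕ → ℕ
  antitone : Antitone parts
  finite : ∃ N, parts N = 0

def emptyP : YPartition := ⟨fun _ => 0, fun _ _ _ => le_rfl, ⟨0, rfl⟩⟩

/-- `l` is `e`-regular: no nonzero part is repeated `e` or more times. -/
def ERegular (e : ℕ) (l : YPartition) : Prop :=
  ¬ ∃ j, l.parts j ≠ 0 ∧ l.parts j = l.parts (j + e - 1)

/-- the β-set of `l` with respect to `c = s + m` : `{l_j - j + c : 1 ≤ j ≤ c}`
(written 0-indexed as `{l.parts j + (c - 1 - j) : 0 ≤ j < c}`). -/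
def betaSet (l : YPartition) (c : ℕ) : Finset ℕ :=
  (Finset.range c).image (fun j => l.parts j + (c - 1 - j))

/-- pick the largest element of `Y` that is `≤ a`, or the largest element of `Y` if none. -/
def pickLE (a : ℕ) (Y : Finset ℕ) : ℕ :=
  if h : (Y.filter (fun b => b ≤ a)).Nonempty then (Y.filter (fun b => b ≤ a)).max' h
  else if h2 : Y.Nonempty then Y.max' h2 else 0

/-- greedy matching: process the given list in order, each time picking via `pickLE`
from the remaining elements of `Y`. -/
def greedyList : List ℕ → Finset ℕ → List ℕ
  | [], _ => []
  | a :: as, Y => pickLE a Y :: greedyList as (Y.erase (pickLE a Y))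

/-- the list of images of the greedy injection `φ : X1 → X2`, processing the elements
of `X1` in increasing order. -/
def phiList (X1 X2 : Finset ℕ) : List ℕ := greedyList (X1.sort (· ≤ ·)) X2

/-- the image `Y1 = φ(X1)` of the greedy injection. -/
def phiImage (X1 X2 : Finset ℕ) : Finset ℕ := (phiList X1 X2).toFinset

/-- the map `Ψ_{(e,(m1,m2))}` on pairs of finite sets of nonnegative integers:
`Ψ(X1,X2) = (φ(X1), (X1+e) ∪ {b+e : b ∈ X2 \ φ(X1)} ∪ {0,…,e-1})`. -/
def Psi (e : ℕ) (X1 X2 : Finset ℕ) : Finset ℕ × Finset ℕ :=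
  (phiImage X1 X2,
   (X1.image (fun x => x + e)) ∪ ((X2 \ phiImage X1 X2).image (fun x => x + e)) ∪
     Finset.range e)

/-- iterate the map `(X1,X2) ↦ Ψ_e(X1,X2)` (the combinatorial formula for
`Ψ_{(e,(m1,m2))}` does not depend on `(m1,m2)`). -/
def iterPsi (e : ℕ) : ℕ → Finset ℕ × Finset ℕ → Finset ℕ × Finset ℕ
  | 0, p => p
  | k+1, p => Psi e (iterPsi e k p).1 (iterPsi e k p).2

/-- the crystal isomorphism `ψ_{(e,(s1,s2))} : Φ_{(e,(s1,s2))} → Φ_{(e,(s1,s2+e))}`,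
expressed combinatorially on β-sets: `PsiRel e s1 s2 L M` holds when for every
admissible `m`, applying `Ψ_e` to the β-sets of `L` (sizes `s1+m`, `s2+m`) yields the
β-sets of `M` (sizes `s1+m`, `s2+e+m`). -/
def PsiRel (e s1 s2 : ℕ) (L M : YPartition × YPartition) : Prop :=
  ∀ m : ℕ, L.1.parts (s1 + m) = 0 → L.2.parts (s2 + m) = 0 →
    M.1.parts (s1 + m) = 0 → M.2.parts (s2 + e + m) = 0 →
    Psi e (betaSet L.1 (s1 + m)) (betaSet L.2 (s2 + m)) =
      (betaSet M.1 (s1 + m), betaSet M.2 (s2 + e + m))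


lemma parts_zero_of_ge (l : YPartition) : ∃ N, ∀ n, N ≤ n → l.parts n = 0 := by
  obtain ⟨N, hN⟩ := l.finite
  exact ⟨N, fun n hn => Nat.le_antisymm (hN ▸ l.antitone hn) (Nat.zero_le _)⟩

lemma betaSet_add (l : YPartition) (c e : ℕ) (h : l.parts c = 0) :
    betaSet l (c + e) = (betaSet l c).image (fun x => x + e) ∪ Finset.range e := by
  have hz : ∀ j, c ≤ j → l.parts j = 0 := fun j hj =>
    Nat.le_antisymm (h ▸ l.antitone hj) (Nat.zero_le _)
  ext x
  simp only [betaSet, Finset.mem_union, Finset.mem_image, Finset.mem_range]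
  constructor
  · rintro ⟨j, hj, rfl⟩
    by_cases hjc : j < c
    · left
      exact ⟨_, ⟨j, hjc, rfl⟩, by omega⟩
    · right
      rw [hz j (by omega)]
      omega
  · rintro (⟨x, ⟨j, hj, rfl⟩, rfl⟩ | hx)
    · exact ⟨j, by omega, by omega⟩
    · refine ⟨c + e - 1 - x, by omega, ?_⟩
      rw [hz _ (by omega)]
      omega

lemma pickLE_self (a : ℕ) (Y : Finset ℕ) (ha : a ∈ Y) : pickLE a Y = a := by
  have hne : (Y.filter (fun b => b ≤ a)).Nonempty :=
    ⟨a, Finset.mem_filter.2 ⟨ha, le_rfl⟩⟩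
  rw [pickLE, dif_pos hne]
  have hmem : a ∈ Y.filter (fun b => b ≤ a) := Finset.mem_filter.2 ⟨ha, le_rfl⟩
  refine le_antisymm ?_ (Finset.le_max' (Y.filter (fun b => b ≤ a)) a hmem)
  have := Finset.max'_mem _ hne
  exact (Finset.mem_filter.1 this).2

lemma greedyList_id (L : List ℕ) (Y : Finset ℕ) (hnd : L.Nodup)
    (hsub : ∀ a ∈ L, a ∈ Y) : greedyList L Y = L := by
  induction L generalizing Y with
  | nil => rfl
  | cons a as ih =>
    have ha : a ∈ Y := hsub a List.mem_cons_self
    rw [greedyList, pickLE_self a Y ha, ih (Y.erase a) (List.nodup_cons.1 hnd).2]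
    intro b hb
    exact Finset.mem_erase.2 ⟨fun hba => (List.nodup_cons.1 hnd).1 (hba ▸ hb),
      hsub b (List.mem_cons_of_mem a hb)⟩

lemma phiImage_of_subset {X1 X2 : Finset ℕ} (h : X1 ⊆ X2) : phiImage X1 X2 = X1 := by
  rw [phiImage, phiList, greedyList_id _ _ (X1.sort_nodup _)
    (fun a ha => h ((Finset.mem_sort _).1 ha)), Finset.sort_toFinset]

lemma Psi_of_subset (e : ℕ) {X1 X2 : Finset ℕ} (h : X1 ⊆ X2) :
    Psi e X1 X2 = (X1, X2.image (fun x => x + e) ∪ Finset.range e) := by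
  rw [Psi, phiImage_of_subset h]
  congr 1
  rw [← Finset.image_union, Finset.union_sdiff_of_subset h]

lemma range_shift_union (e : ℕ) :
    (Finset.range e).image (fun x => x + e) ∪ Finset.range e = Finset.range (2*e) := by
  ext x
  simp only [Finset.mem_union, Finset.mem_image, Finset.mem_range]
  constructor
  · rintro (⟨y, hy, rfl⟩ | hx) <;> omega
  · intro hx
    by_cases h : x < e
    · exact Or.inr h
    · exact Or.inl ⟨x - e, by omega, by omega⟩

lemma psi_two (e : ℕ) (X1 X2 : Finset ℕ)
    (h : (Psi e X1 X2).1 ⊆ (Psi e X1 X2).2) :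
    Psi (2*e) X1 X2 = Psi e (Psi e X1 X2).1 (Psi e X1 X2).2 := by
  rw [Psi_of_subset e h]
  show Psi (2*e) X1 X2 = ((Psi e X1 X2).1, _)
  rw [Psi]
  refine Prod.ext rfl ?_
  show _ = (Psi e X1 X2).2.image (fun x => x + e) ∪ Finset.range e
  show _ = ((X1.image (fun x => x + e)) ∪ ((X2 \ phiImage X1 X2).image (fun x => x + e)) ∪
     Finset.range e).image (fun x => x + e) ∪ Finset.range e
  rw [Finset.image_union, Finset.image_union, Finset.image_image, Finset.image_image,
    Finset.union_assoc, Finset.union_assoc, range_shift_union]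
  ext x
  simp only [Finset.mem_union, Finset.mem_image, Function.comp_apply]
  constructor
  · rintro (⟨y, hy, rfl⟩ | (⟨y, hy, rfl⟩ | hx))
    · exact Or.inl (Or.inl ⟨y, hy, by omega⟩)
    · exact Or.inl (Or.inr ⟨y, hy, by omega⟩)
    · exact Or.inr hx
  · rintro ((⟨y, hy, rfl⟩ | ⟨y, hy, rfl⟩) | hx)
    · exact Or.inl ⟨y, hy, by omega⟩
    · exact Or.inr (Or.inl ⟨y, hy, by omega⟩)
    · exact Or.inr (Or.inr hx)

lemma filter_card_of_anti {f : ℕ → ℕ} {c : ℕ}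
    (hf : ∀ i j, i < j → j < c → f j < f i) (j : ℕ) (hj : j < c) :
    (((Finset.range c).image f).filter (fun x => f j < x)).card = j := by
  have : ((Finset.range c).image f).filter (fun x => f j < x) = (Finset.range j).image f := by
    ext x
    simp only [Finset.mem_filter, Finset.mem_image, Finset.mem_range]
    constructor
    · rintro ⟨⟨i, hi, rfl⟩, hlt⟩
      refine ⟨i, ?_, rfl⟩
      by_contra hij
      push_neg at hij
      rcases Nat.lt_or_ge j i with h' | h'
      · exact absurd (hf j i h' hi) (by omega)
      · have hij' : i = j := by omega
        rw [hij'] at hlt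
        omega
    · rintro ⟨i, hi, rfl⟩
      exact ⟨⟨i, by omega, rfl⟩, hf i j hi hj⟩
  rw [this, Finset.card_image_of_injOn, Finset.card_range]
  intro a ha b hb hab
  simp only [Finset.coe_range, Set.mem_Iio] at ha hb
  by_contra hne
  rcases Nat.lt_or_ge a b with h' | h'
  · exact absurd (hf a b h' (by omega)) (by omega)
  · exact absurd (hf b a (by omega) (by omega)) (by omega)

lemma anti_image_eq {f g : ℕ → ℕ} {c : ℕ}
    (hf : ∀ i j, i < j → j < c → f j < f i) (hg : ∀ i j, i < j → j < c → g j < g i)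
    (h : (Finset.range c).image f = (Finset.range c).image g) :
    ∀ j, j < c → f j = g j := by
  have key : ∀ (f g : ℕ → ℕ), (∀ i j, i < j → j < c → f j < f i) →
      (∀ i j, i < j → j < c → g j < g i) →
      (Finset.range c).image f = (Finset.range c).image g →
      ∀ j, j < c → ¬ f j < g j := by
    intro f g hf hg h j hj hlt
    have h1 := filter_card_of_anti hf j hj
    have h2 := filter_card_of_anti hg j hj
    rw [← h] at h2
    have hgj : g j ∈ (Finset.range c).image f := by
      rw [h]; exact Finset.mem_image_of_mem g (Finset.mem_range.2 hj)
    have hsub : insert (g j) (((Finset.range c).image f).filter (fun x => g j < x)) ⊆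
        ((Finset.range c).image f).filter (fun x => f j < x) := by
      intro x hx
      rcases Finset.mem_insert.1 hx with rfl | hx
      · exact Finset.mem_filter.2 ⟨hgj, hlt⟩
      · have := Finset.mem_filter.1 hx
        exact Finset.mem_filter.2 ⟨this.1, by omega⟩
    have hcard := Finset.card_le_card hsub
    rw [Finset.card_insert_of_notMem (by simp), h1, h2] at hcard
    omega
  intro j hj
  have h1 := key f g hf hg h j hj
  have h2 := key g f hg hf h.symm j hj
  omega

lemma betaSet_anti (l : YPartition) (c : ℕ) :
    ∀ i j, i < j → j < c → l.parts j + (c - 1 - j) < l.parts i + (c - 1 - i) := by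
  intro i j hij hj
  have := l.antitone (le_of_lt hij)
  omega

lemma parts_eq_of_betaSet_eq {L L' : YPartition} {c : ℕ}
    (h : betaSet L c = betaSet L' c) : ∀ j, j < c → L.parts j = L'.parts j := by
  intro j hj
  have := anti_image_eq (betaSet_anti L c) (betaSet_anti L' c) h j hj
  omega

/-- assume the greedy-injection conjecture (for all `X` and odd `k`, the
`k+1`-fold iterate of `Ψ` on `(X,X)` satisfies the inclusion of components). Then for
every `e`-regular partition `λ` and every `k`, the chain of crystal isomorphisms
`ψ_{(2e,(0,(2k+1)e))}∘⋯∘ψ_{(2e,(0,e))}` and the chain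
`ψ_{(e,(0,(2k+1)e))}∘⋯∘ψ_{(e,(0,0))}` take `(λ,λ)` to the same bipartition; in
particular the stabilized isomorphisms agree: `ψ̃_{(2e,(0,e))}(λ,λ) = ψ̃_{(e,(0,0))}(λ,λ)`. -/
theorem stmt_17 (e : ℕ) (he : 1 < e)
    (hconj : ∀ (X : Finset ℕ) (k : ℕ), Odd k →
      (iterPsi e (k+1) (X, X)).1 ⊆ (iterPsi e (k+1) (X, X)).2)
    (l : YPartition) (hreg : ERegular e l) (k : ℕ)
    (B1 B2 : ℕ → YPartition × YPartition)
    (hB10 : B1 0 = (l, l)) (hB20 : B2 0 = (l, l))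
    (hB1 : ∀ j, j < 2*k+2 → PsiRel e 0 (j*e) (B1 j) (B1 (j+1)))
    (hB2 : ∀ j, j < k+1 → PsiRel (2*e) 0 ((2*j+1)*e) (B2 j) (B2 (j+1))) :
    (B1 (2*k+2)).1.parts = (B2 (k+1)).1.parts ∧
    (B1 (2*k+2)).2.parts = (B2 (k+1)).2.parts := by
  -- uniform vanishing bound
  have hb : ∀ j : ℕ, ∃ N, ∀ n, N ≤ n → (B1 j).1.parts n = 0 ∧ (B1 j).2.parts n = 0 ∧
      (B2 j).1.parts n = 0 ∧ (B2 j).2.parts n = 0 := by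
    intro j
    obtain ⟨N1, h1⟩ := parts_zero_of_ge (B1 j).1
    obtain ⟨N2, h2⟩ := parts_zero_of_ge (B1 j).2
    obtain ⟨N3, h3⟩ := parts_zero_of_ge (B2 j).1
    obtain ⟨N4, h4⟩ := parts_zero_of_ge (B2 j).2
    refine ⟨max (max N1 N2) (max N3 N4), fun n hn => ?_⟩
    exact ⟨h1 n (by omega), h2 n (by omega), h3 n (by omega), h4 n (by omega)⟩
  choose F hF using hb
  set M : ℕ := (Finset.range (2*k+3)).sup F with hMdef
  have hM : ∀ j, j ≤ 2*k+2 → ∀ n, M ≤ n → (B1 j).1.parts n = 0 ∧ (B1 j).2.parts n = 0 ∧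
      (B2 j).1.parts n = 0 ∧ (B2 j).2.parts n = 0 := by
    intro j hj n hn
    exact hF j n (le_trans (Finset.le_sup (Finset.mem_range.2 (by omega))) hn)
  have h1 : ∀ j, j ≤ 2*k+2 → ∀ m, M ≤ m →
      (betaSet (B1 j).1 m, betaSet (B1 j).2 (j*e + m)) =
        iterPsi e j (betaSet l m, betaSet l m) := by
    intro j
    induction j with
    | zero => intro _ m hm; simp [hB10, iterPsi]
    | succ j ih =>
      intro hj m hm
      have hj' : j ≤ 2*k+2 := by omega
      have heq := ih hj' m hm
      have hrel := hB1 j (by omega) m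
        (hM j hj' (0+m) (by omega)).1
        (hM j hj' (j*e+m) (by omega)).2.1
        (hM (j+1) (by omega) (0+m) (by omega)).1
        (hM (j+1) (by omega) (j*e+e+m) (by omega)).2.1
      simp only [Nat.zero_add] at hrel
      have harith : j*e + e + m = (j+1)*e + m := by ring
      rw [harith] at hrel
      rw [iterPsi, ← heq]
      exact hrel.symm
  have hbr : ∀ (X : Finset ℕ) (j : ℕ),
      iterPsi (2*e) j (X, X.image (fun x => x + e) ∪ Finset.range e) =
        iterPsi e (2*j+1) (X, X) := by
    intro X j
    induction j with
    | zero =>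
      show _ = iterPsi e (2*0+1) (X, X)
      rw [show 2*0+1 = 0+1 by ring]
      simp only [iterPsi]
      rw [Psi_of_subset e (subset_refl X)]
    | succ j ih =>
      have hinc : (Psi e (iterPsi e (2*j+1) (X, X)).1 (iterPsi e (2*j+1) (X, X)).2).1 ⊆
          (Psi e (iterPsi e (2*j+1) (X, X)).1 (iterPsi e (2*j+1) (X, X)).2).2 := by
        have hc := hconj X (2*j+1) ⟨j, by ring⟩
        rw [iterPsi] at hc
        exact hc
      rw [iterPsi, ih, psi_two e _ _ hinc]
      rfl
  have hl0 : ∀ m, M ≤ m → l.parts m = 0 := by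
    intro m hm
    have := (hM 0 (by omega) m hm).1
    rwa [hB10] at this
  have h2 : ∀ j, j ≤ k+1 → ∀ m, M ≤ m →
      (betaSet (B2 j).1 m, betaSet (B2 j).2 ((2*j+1)*e + m)) =
        iterPsi (2*e) j (betaSet l m, (betaSet l m).image (fun x => x + e) ∪ Finset.range e) := by
    intro j
    induction j with
    | zero =>
      intro _ m hm
      simp only [iterPsi]
      rw [hB20]
      refine Prod.ext rfl ?_
      show betaSet l ((2*0+1)*e + m) = _
      rw [show (2*0+1)*e + m = m + e by ring, betaSet_add l m e (hl0 m hm)]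
    | succ j ih =>
      intro hj m hm
      have hj' : j ≤ k+1 := by omega
      have hj2 : j ≤ 2*k+2 := by omega
      have heq := ih hj' m hm
      have hrel := hB2 j (by omega) m
        (hM j hj2 (0+m) (by omega)).2.2.1
        (hM j hj2 ((2*j+1)*e+m) (by omega)).2.2.2
        (hM (j+1) (by omega) (0+m) (by omega)).2.2.1
        (hM (j+1) (by omega) ((2*j+1)*e+2*e+m) (by omega)).2.2.2
      simp only [Nat.zero_add] at hrel
      rw [show (2*j+1)*e+2*e+m = (2*(j+1)+1)*e + m by ring] at hrel
      rw [iterPsi, ← heq]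
      exact hrel.symm
  have main : ∀ m, M ≤ m →
      betaSet (B1 (2*k+2)).1 m = betaSet (B2 (k+1)).1 m ∧
      betaSet (B1 (2*k+2)).2 ((2*(k+1)+1)*e + m) =
        betaSet (B2 (k+1)).2 ((2*(k+1)+1)*e + m) := by
    intro m hm
    have hA := h1 (2*k+2) le_rfl m hm
    have hB := h2 (k+1) le_rfl m hm
    rw [hbr] at hB
    set X := betaSet l m with hX
    have hinc : (iterPsi e (2*k+1+1) (X, X)).1 ⊆ (iterPsi e (2*k+1+1) (X, X)).2 :=
      hconj X (2*k+1) ⟨k, by ring⟩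
    have hP : iterPsi e (2*(k+1)+1) (X, X) =
        ((iterPsi e (2*k+1+1) (X, X)).1,
         (iterPsi e (2*k+1+1) (X, X)).2.image (fun x => x + e) ∪ Finset.range e) := by
      rw [show 2*(k+1)+1 = (2*k+1+1)+1 by ring]
      exact Psi_of_subset e hinc
    rw [hP] at hB
    have e1 : betaSet (B1 (2*k+2)).1 m = (iterPsi e (2*k+2) (X, X)).1 := congrArg Prod.fst hA
    have e2 : betaSet (B1 (2*k+2)).2 ((2*k+2)*e+m) = (iterPsi e (2*k+2) (X, X)).2 :=
      congrArg Prod.snd hA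
    have f1 : betaSet (B2 (k+1)).1 m = (iterPsi e (2*k+1+1) (X, X)).1 := congrArg Prod.fst hB
    have f2 : betaSet (B2 (k+1)).2 ((2*(k+1)+1)*e + m) =
        (iterPsi e (2*k+1+1) (X, X)).2.image (fun x => x + e) ∪ Finset.range e :=
      congrArg Prod.snd hB
    have hidx : (2 : ℕ)*k+1+1 = 2*k+2 := by ring
    rw [hidx] at f1 f2
    constructor
    · exact e1.trans f1.symm
    · have hvan : (B1 (2*k+2)).2.parts ((2*k+2)*e+m) = 0 :=
        (hM (2*k+2) le_rfl _ (by omega)).2.1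
      have g2 : betaSet (B1 (2*k+2)).2 ((2*(k+1)+1)*e + m) =
          (betaSet (B1 (2*k+2)).2 ((2*k+2)*e+m)).image (fun x => x + e) ∪ Finset.range e := by
        rw [show (2*(k+1)+1)*e + m = ((2*k+2)*e + m) + e by ring,
          betaSet_add _ _ _ hvan]
      rw [g2, e2, ← f2]
  constructor
  · funext i
    obtain ⟨hfst, _⟩ := main (M + i + 1) (by omega)
    exact parts_eq_of_betaSet_eq hfst i (by omega)
  · funext i
    obtain ⟨_, hsnd⟩ := main (M + i + 1) (by omega)
    exact parts_eq_of_betaSet_eq hsnd i (by omega)
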